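/- Let p be a prime with p > 3. Then (-1)^((p-1)/2) · C(p-1, (p-1)/2) ≡ 4^(p-1) (mod p^3) (Morley's congruence). -/

import Mathlib

open Finset

namespace Morley

lemma prod_expand {R : Type*} [CommRing R] (P : R) (hP : P ^ 3 = 0) (s : Finset ℕ) (f : ℕ → R) :
    ∃ t : R, (∏ k ∈ s, (1 + P * f k)) = 1 + P * (∑ k ∈ s, f k) + P ^ 2 * t ∧
      2 * t = (∑ k ∈ s, f k) ^ 2 - ∑ k ∈ s, (f k) ^ 2 := by
  classical
  induction s using Finset.induction_on with
  | empty => exact ⟨0, by simp, by simp⟩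
  | @insert x s hx ih =>
    obtain ⟨t, h1, h2⟩ := ih
    refine ⟨t + f x * ∑ k ∈ s, f k, ?_, ?_⟩
    · rw [Finset.prod_insert hx, h1, Finset.sum_insert hx]
      linear_combination (f x * t) * hP
    · rw [Finset.sum_insert hx, Finset.sum_insert hx]
      linear_combination h2

lemma prod_Ioc_id (n : ℕ) : (∏ x ∈ Ioc 0 n, x) = Nat.factorial n := by
  induction n with
  | zero => simp
  | succ n ih =>
    rw [Finset.prod_Ioc_succ_top (Nat.zero_le _), ih, Nat.factorial_succ, mul_comm]

lemma prod_split (a : ℕ) (n : ℕ) : (∏ j ∈ Ioc 0 (2 * n), (a + j))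
    = (∏ k ∈ Ioc 0 n, (a + (2 * k - 1))) * ∏ k ∈ Ioc 0 n, (a + 2 * k) := by
  induction n with
  | zero => simp
  | succ n ih =>
    have h1 : 2 * (n + 1) = 2 * n + 1 + 1 := by ring
    rw [h1, Finset.prod_Ioc_succ_top (by omega), Finset.prod_Ioc_succ_top (by omega),
      Finset.prod_Ioc_succ_top (Nat.zero_le _), Finset.prod_Ioc_succ_top (Nat.zero_le _), ih,
      show 2 * (n + 1) - 1 = 2 * n + 1 from by omega, show 2 * (n + 1) = 2 * n + 1 + 1 from by ring]
    ring

variable {p : ℕ}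

lemma sum_inv_sq_full [hpf : Fact p.Prime] (hp3 : 3 < p) :
    ∑ k ∈ Ioc 0 (p - 1), ((k : ZMod p)⁻¹) ^ 2 = 0 := by
  have h1 : ∑ k ∈ Ioc 0 (p - 1), ((k : ZMod p)⁻¹) ^ 2
      = ∑ x ∈ Finset.univ.erase (0 : ZMod p), (x⁻¹) ^ 2 := by
    refine Finset.sum_nbij' (fun k => (k : ZMod p)) (fun x => x.val) ?_ ?_ ?_ ?_ ?_
    · intro k hk
      simp only [mem_Ioc] at hk
      refine Finset.mem_erase.mpr ⟨?_, Finset.mem_univ _⟩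
      intro h0
      have := (ZMod.natCast_eq_zero_iff k p).mp h0
      have := Nat.le_of_dvd hk.1 this
      omega
    · intro x hx
      simp only [Finset.mem_erase] at hx
      simp only [mem_Ioc]
      have h1 : x.val < p := ZMod.val_lt x
      have h2 : x.val ≠ 0 := fun h => hx.1 ((ZMod.val_eq_zero x).mp h)
      omega
    · intro k hk
      simp only [mem_Ioc] at hk
      exact ZMod.val_cast_of_lt (by omega)
    · intro x _
      exact ZMod.natCast_zmod_val x
    · intro k _
      rfl
  rw [h1]
  have h2 : ∑ x ∈ Finset.univ.erase (0 : ZMod p), (x⁻¹) ^ 2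
      = ∑ x ∈ Finset.univ.erase (0 : ZMod p), x ^ 2 := by
    refine Finset.sum_nbij' (fun x => x⁻¹) (fun x => x⁻¹) ?_ ?_ ?_ ?_ ?_
    · intro x hx
      simp only [Finset.mem_erase] at hx ⊢
      exact ⟨inv_ne_zero hx.1, Finset.mem_univ _⟩
    · intro x hx
      simp only [Finset.mem_erase] at hx ⊢
      exact ⟨inv_ne_zero hx.1, Finset.mem_univ _⟩
    · intro x _; exact inv_inv x
    · intro x _; exact inv_inv x
    · intro x _; rfl
  rw [h2, Finset.sum_erase _ (by simp)]
  refine FiniteField.sum_pow_lt_card_sub_one (ZMod p) 2 ?_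
  rw [ZMod.card]; omega

lemma sum_inv_sq_half [hpf : Fact p.Prime] (hp3 : 3 < p) (m : ℕ) (hm : p = 2 * m + 1) :
    ∑ k ∈ Ioc 0 m, ((k : ZMod p)⁻¹) ^ 2 = 0 := by
  have hsecond : ∑ k ∈ Ioc m (2 * m), (((k : ℕ) : ZMod p)⁻¹) ^ 2
      = ∑ k ∈ Ioc 0 m, ((k : ZMod p)⁻¹) ^ 2 := by
    refine Finset.sum_nbij' (fun k => p - k) (fun k => p - k) ?_ ?_ ?_ ?_ ?_
    · intro k hk; simp only [mem_Ioc] at hk ⊢; omega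
    · intro k hk; simp only [mem_Ioc] at hk ⊢; omega
    · intro k hk; simp only [mem_Ioc] at hk; show p - (p - k) = k; omega
    · intro k hk; simp only [mem_Ioc] at hk; show p - (p - k) = k; omega
    · intro k hk
      simp only [mem_Ioc] at hk
      have hc : ((p - k : ℕ) : ZMod p) = -(k : ZMod p) := by
        push_cast [Nat.cast_sub (by omega : k ≤ p)]
        simp [ZMod.natCast_self]
      rw [hc, inv_neg, neg_sq]
  have hsplit := Finset.sum_Ioc_consecutive (fun k => ((k : ZMod p)⁻¹) ^ 2)
    (Nat.zero_le m) (by omega : m ≤ 2 * m)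
  have hfull := sum_inv_sq_full (p := p) hp3
  rw [show p - 1 = 2 * m from by omega] at hfull
  have h2 : (2 : ZMod p) * ∑ k ∈ Ioc 0 m, ((k : ZMod p)⁻¹) ^ 2 = 0 := by
    rw [two_mul]
    calc ∑ k ∈ Ioc 0 m, ((k : ZMod p)⁻¹) ^ 2 + ∑ k ∈ Ioc 0 m, ((k : ZMod p)⁻¹) ^ 2
        = ∑ k ∈ Ioc 0 m, ((k : ZMod p)⁻¹) ^ 2 + ∑ k ∈ Ioc m (2 * m), ((k : ZMod p)⁻¹) ^ 2 := by
          rw [hsecond]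
      _ = 0 := by rw [hsplit, hfull]
  have h2ne : (2 : ZMod p) ≠ 0 := by
    intro h
    have := (ZMod.natCast_eq_zero_iff 2 p).mp (by exact_mod_cast h)
    have := Nat.le_of_dvd (by norm_num) this
    omega
  exact (mul_eq_zero.mp h2).resolve_left h2ne

lemma unit_cast (hp : p.Prime) {k : ℕ} (hk : ¬ p ∣ k) : IsUnit (k : ZMod (p ^ 3)) := by
  rw [ZMod.isUnit_iff_coprime]
  exact Nat.Coprime.pow_right _ ((hp.coprime_iff_not_dvd.mpr hk).symm)

lemma kill (hp : p.Prime) {x : ZMod (p ^ 3)}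
    (hx : ZMod.castHom (dvd_pow_self p three_ne_zero) (ZMod p) x = 0) :
    (p : ZMod (p ^ 3)) ^ 2 * x = 0 := by
  haveI : NeZero (p ^ 3) := ⟨pow_ne_zero 3 hp.pos.ne'⟩
  have hv : ((x.val : ℕ) : ZMod (p ^ 3)) = x := ZMod.natCast_zmod_val x
  rw [← hv, map_natCast] at hx
  obtain ⟨c, hc⟩ := (ZMod.natCast_eq_zero_iff _ p).mp hx
  have h3 : ((p : ZMod (p ^ 3))) ^ 3 = 0 := by
    rw [← Nat.cast_pow, ZMod.natCast_self]
  rw [← hv, hc]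
  push_cast
  linear_combination ((c : ZMod (p ^ 3))) * h3

lemma cast_inv (hp : p.Prime) {k : ℕ} (hk : ¬ p ∣ k) :
    ZMod.castHom (dvd_pow_self p three_ne_zero) (ZMod p) ((k : ZMod (p ^ 3))⁻¹)
      = (k : ZMod p)⁻¹ := by
  haveI : Fact p.Prime := ⟨hp⟩
  have h1 : (k : ZMod (p ^ 3)) * (k : ZMod (p ^ 3))⁻¹ = 1 :=
    ZMod.mul_inv_of_unit _ (unit_cast hp hk)
  have h2 := congrArg (ZMod.castHom (dvd_pow_self p three_ne_zero) (ZMod p)) h1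
  rw [map_mul, map_natCast, map_one] at h2
  exact (inv_eq_of_mul_eq_one_right h2).symm


lemma key0_alg {R : Type*} [CommRing R] (P s E t eV Q E2 : R) (hu2 : IsUnit (2 : R))
    (ht2' : 2 * t = s ^ 2 - Q) (hv2 : 2 * eV = E ^ 2 - E2)
    (hQ : P ^ 2 * Q = 0) (hE2 : P ^ 2 * E2 = 0) (hsE : s = 2 * E) :
    P ^ 2 * (t + 2 * eV - 3 * E ^ 2) = 0 := by
  have k1 : (2 : R) * (P ^ 2 * (t + 2 * eV - 3 * E ^ 2)) = 0 := by
    linear_combination P ^ 2 * ht2' + 2 * P ^ 2 * hv2 - hQ - 2 * hE2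
      + (P ^ 2 * (s + 2 * E)) * hsE
  exact hu2.mul_left_cancel (by rw [k1, mul_zero])

lemma final_alg {R : Type*} [CommRing R] (P s E t eV z : R)
    (hP3 : P ^ 3 = 0) (hsE : s = 2 * E)
    (key0 : P ^ 2 * (t + 2 * eV - 3 * E ^ 2) = 0)
    (hz : z * (1 + P * E + P ^ 2 * eV) = 1) :
    (1 - P * s + P ^ 2 * t) = z ^ 2 := by
  have hZu : IsUnit (1 + P * E + P ^ 2 * eV) :=
    IsUnit.of_mul_eq_one z (by linear_combination hz)
  have hKey2 : (1 - P * s + P ^ 2 * t)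
      * ((1 + P * E + P ^ 2 * eV) * (1 + P * E + P ^ 2 * eV)) = 1 := by
    linear_combination key0
      + (-P - 2 * P ^ 2 * E - 2 * P ^ 3 * eV - P ^ 3 * E ^ 2 - 2 * P ^ 4 * E * eV
          - P ^ 5 * eV ^ 2) * hsE
      + (-2 * E * eV + 2 * E * t - 2 * E ^ 3 + P * eV ^ 2 + 2 * P * t * eV
          - 4 * P * E ^ 2 * eV + P * E ^ 2 * t - 2 * P ^ 2 * E * eV ^ 2
          + 2 * P ^ 2 * E * t * eV + P ^ 3 * t * eV ^ 2) * hP3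
  have hKey3 : (1 - P * s + P ^ 2 * t)
      * ((1 + P * E + P ^ 2 * eV) * (1 + P * E + P ^ 2 * eV))
      = z ^ 2 * ((1 + P * E + P ^ 2 * eV) * (1 + P * E + P ^ 2 * eV)) := by
    rw [hKey2]
    linear_combination (-(z * (1 + P * E + P ^ 2 * eV)) - 1) * hz
  exact (hZu.mul hZu).mul_right_cancel hKey3

end Morley

open Finset

theorem morley_congruence (p : ℕ) (hp : p.Prime) (hp3 : 3 < p) :
    ((-1) ^ ((p - 1) / 2) * ((p - 1).choose ((p - 1) / 2) : ℤ))
      ≡ 4 ^ (p - 1) [ZMOD (p : ℤ) ^ 3] := by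
  haveI hpf : Fact p.Prime := ⟨hp⟩
  haveI : NeZero (p ^ 3) := ⟨pow_ne_zero 3 hp.pos.ne'⟩
  obtain ⟨c, hc⟩ := hp.odd_of_ne_two (by omega)
  set m := (p - 1) / 2 with hm_def
  have hpm : p = 2 * m + 1 := by omega
  suffices key : ((-1 : ZMod (p ^ 3)) ^ m * ((p - 1).choose m : ZMod (p ^ 3)) = 4 ^ (p - 1)) by
    have h1 : ((((-1 : ℤ)) ^ m * ((p - 1).choose m : ℤ) : ℤ) : ZMod (p ^ 3))
        = ((4 ^ (p - 1) : ℤ) : ZMod (p ^ 3)) := by push_cast; exact_mod_cast key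
    have h2 := (ZMod.intCast_eq_intCast_iff _ _ _).mp h1
    have h3 : ((p ^ 3 : ℕ) : ℤ) = (p : ℤ) ^ 3 := by push_cast; ring
    rwa [h3] at h2
  rw [show p - 1 = 2 * m from by omega]
  -- basic helpers
  have hP3 : ((p : ZMod (p ^ 3))) ^ 3 = 0 := by rw [← Nat.cast_pow, ZMod.natCast_self]
  have hnd : ∀ k : ℕ, 0 < k → k < p → ¬ p ∣ k := by
    intro k h1 h2 hd; exact absurd (Nat.le_of_dvd h1 hd) (by omega)
  have hui : ∀ k : ℕ, 0 < k → k < p → (k : ZMod (p ^ 3)) * ((k : ZMod (p ^ 3)))⁻¹ = 1 := by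
    intro k h1 h2; exact ZMod.mul_inv_of_unit _ (Morley.unit_cast hp (hnd k h1 h2))
  have hu2 : IsUnit (2 : ZMod (p ^ 3)) := by
    have h2d : ¬ p ∣ 2 := fun hd => by have := Nat.le_of_dvd (by norm_num) hd; omega
    have := Morley.unit_cast hp h2d
    simpa using this
  have hufactm : IsUnit ((Nat.factorial m : ℕ) : ZMod (p ^ 3)) := by
    refine Morley.unit_cast hp (fun hd => ?_)
    have := (Nat.Prime.dvd_factorial hp).mp hd
    omega
  have hufact2m : IsUnit ((Nat.factorial (2 * m) : ℕ) : ZMod (p ^ 3)) := by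
    refine Morley.unit_cast hp (fun hd => ?_)
    have := (Nat.Prime.dvd_factorial hp).mp hd
    omega
  -- field facts
  have hQF : ∑ k ∈ Ioc 0 m, ((k : ZMod p)⁻¹) ^ 2 = 0 := Morley.sum_inv_sq_half hp3 m hpm
  have hQFfull : ∑ k ∈ Ioc 0 (2 * m), ((k : ZMod p)⁻¹) ^ 2 = 0 := by
    have := Morley.sum_inv_sq_full (p := p) hp3
    rwa [show p - 1 = 2 * m from by omega] at this
  have hkill : ∀ x : ZMod (p ^ 3),
      ZMod.castHom (dvd_pow_self p three_ne_zero) (ZMod p) x = 0 →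
        (p : ZMod (p ^ 3)) ^ 2 * x = 0 := fun x hx => Morley.kill hp hx
  have hφinv : ∀ k : ℕ, 0 < k → k < p →
      ZMod.castHom (dvd_pow_self p three_ne_zero) (ZMod p) (((k : ZMod (p ^ 3)))⁻¹)
        = ((k : ZMod p))⁻¹ := fun k h1 h2 => Morley.cast_inv hp (hnd k h1 h2)
  -- p^2 * (sum of inverse squares over half range) = 0
  have hQ : (p : ZMod (p ^ 3)) ^ 2 * (∑ k ∈ Ioc 0 m, (((k : ZMod (p ^ 3)))⁻¹) ^ 2) = 0 := by
    apply hkill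
    have h1 : ∀ k ∈ Ioc 0 m, (ZMod.castHom (dvd_pow_self p three_ne_zero) (ZMod p))
        ((((k : ZMod (p ^ 3)))⁻¹) ^ 2) = ((k : ZMod p)⁻¹) ^ 2 := by
      intro k hk; simp only [mem_Ioc] at hk
      rw [map_pow, hφinv k hk.1 (by omega)]
    rw [map_sum, Finset.sum_congr rfl h1, hQF]
  have hQfull : (p : ZMod (p ^ 3)) ^ 2
      * (∑ k ∈ Ioc 0 (2 * m), (((k : ZMod (p ^ 3)))⁻¹) ^ 2) = 0 := by
    apply hkill
    have h1 : ∀ k ∈ Ioc 0 (2 * m), (ZMod.castHom (dvd_pow_self p three_ne_zero) (ZMod p))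
        ((((k : ZMod (p ^ 3)))⁻¹) ^ 2) = ((k : ZMod p)⁻¹) ^ 2 := by
      intro k hk; simp only [mem_Ioc] at hk
      rw [map_pow, hφinv k hk.1 (by omega)]
    rw [map_sum, Finset.sum_congr rfl h1, hQFfull]
  have hE2 : (p : ZMod (p ^ 3)) ^ 2
      * (∑ k ∈ Ioc 0 m, ((((2 * k : ℕ) : ZMod (p ^ 3)))⁻¹) ^ 2) = 0 := by
    apply hkill
    have h1 : ∀ k ∈ Ioc 0 m, (ZMod.castHom (dvd_pow_self p three_ne_zero) (ZMod p))
        (((((2 * k : ℕ) : ZMod (p ^ 3)))⁻¹) ^ 2)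
        = ((2 : ZMod p)⁻¹) ^ 2 * ((k : ZMod p)⁻¹) ^ 2 := by
      intro k hk; simp only [mem_Ioc] at hk
      rw [map_pow, hφinv (2 * k) (by omega) (by omega)]
      have h2 : ((2 * k : ℕ) : ZMod p) = (2 : ZMod p) * (k : ZMod p) := by push_cast; ring
      rw [h2, mul_inv, mul_pow]
    rw [map_sum, Finset.sum_congr rfl h1, ← Finset.mul_sum, hQF, mul_zero]
  -- Wolstenholme: p * (full harmonic sum) = 0
  have hpair : ∀ k ∈ Ioc 0 m,
      (p : ZMod (p ^ 3)) * (((k : ZMod (p ^ 3)))⁻¹ + (((p - k : ℕ) : ZMod (p ^ 3)))⁻¹)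
        = (p : ZMod (p ^ 3)) ^ 2
          * (((k : ZMod (p ^ 3)))⁻¹ * (((p - k : ℕ) : ZMod (p ^ 3)))⁻¹) := by
    intro k hk; simp only [mem_Ioc] at hk
    have ha := hui k hk.1 (by omega)
    have hb := hui (p - k) (by omega) (by omega)
    have hab : ((k : ℕ) : ZMod (p ^ 3)) + ((p - k : ℕ) : ZMod (p ^ 3)) = (p : ZMod (p ^ 3)) := by
      rw [Nat.cast_sub (by omega : k ≤ p)]; ring
    linear_combination ((p : ZMod (p ^ 3)) * ((k : ZMod (p ^ 3)))⁻¹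
        * (((p - k : ℕ) : ZMod (p ^ 3)))⁻¹) * hab
      - (p : ZMod (p ^ 3)) * (((p - k : ℕ) : ZMod (p ^ 3)))⁻¹ * ha
      - (p : ZMod (p ^ 3)) * ((k : ZMod (p ^ 3)))⁻¹ * hb
  have hsecondR : ∑ k ∈ Ioc m (2 * m), ((k : ZMod (p ^ 3)))⁻¹
      = ∑ k ∈ Ioc 0 m, (((p - k : ℕ) : ZMod (p ^ 3)))⁻¹ := by
    refine Finset.sum_nbij' (fun k => p - k) (fun k => p - k) ?_ ?_ ?_ ?_ ?_
    · intro k hk; simp only [mem_Ioc] at hk ⊢; omega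
    · intro k hk; simp only [mem_Ioc] at hk ⊢; omega
    · intro k hk; simp only [mem_Ioc] at hk; show p - (p - k) = k; omega
    · intro k hk; simp only [mem_Ioc] at hk; show p - (p - k) = k; omega
    · intro k hk; simp only [mem_Ioc] at hk
      show ((k : ZMod (p ^ 3)))⁻¹ = (((p - (p - k) : ℕ) : ZMod (p ^ 3)))⁻¹
      rw [show p - (p - k) = k from by omega]
  have hph : (p : ZMod (p ^ 3)) * (∑ k ∈ Ioc 0 (2 * m), ((k : ZMod (p ^ 3)))⁻¹) = 0 := by
    have hsplit := Finset.sum_Ioc_consecutive (fun k => ((k : ZMod (p ^ 3)))⁻¹)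
      (Nat.zero_le m) (by omega : m ≤ 2 * m)
    rw [← hsplit, hsecondR, ← Finset.sum_add_distrib, Finset.mul_sum,
      Finset.sum_congr rfl hpair, ← Finset.mul_sum]
    apply hkill
    have h1 : ∀ k ∈ Ioc 0 m, (ZMod.castHom (dvd_pow_self p three_ne_zero) (ZMod p))
        ((((k : ZMod (p ^ 3)))⁻¹ * (((p - k : ℕ) : ZMod (p ^ 3)))⁻¹))
        = -(((k : ZMod p)⁻¹) ^ 2) := by
      intro k hk; simp only [mem_Ioc] at hk
      rw [map_mul, hφinv k hk.1 (by omega), hφinv (p - k) (by omega) (by omega)]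
      have hc2 : ((p - k : ℕ) : ZMod p) = -(k : ZMod p) := by
        rw [Nat.cast_sub (by omega : k ≤ p)]; simp
      rw [hc2, inv_neg]; ring
    rw [map_sum, Finset.sum_congr rfl h1, Finset.sum_neg_distrib, hQF, neg_zero]
  -- expansions
  obtain ⟨eW, hw1x, hw2x⟩ := Morley.prod_expand (p : ZMod (p ^ 3)) hP3 (Ioc 0 (2 * m))
    (fun j => ((j : ZMod (p ^ 3)))⁻¹)
  have hw1 : (∏ j ∈ Ioc 0 (2 * m), (1 + (p : ZMod (p ^ 3)) * ((j : ZMod (p ^ 3)))⁻¹))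
      = 1 + (p : ZMod (p ^ 3)) * (∑ j ∈ Ioc 0 (2 * m), ((j : ZMod (p ^ 3)))⁻¹)
        + (p : ZMod (p ^ 3)) ^ 2 * eW := hw1x
  have hw2 : 2 * eW = (∑ j ∈ Ioc 0 (2 * m), ((j : ZMod (p ^ 3)))⁻¹) ^ 2
      - ∑ j ∈ Ioc 0 (2 * m), (((j : ZMod (p ^ 3)))⁻¹) ^ 2 := hw2x
  obtain ⟨eV, hv1x, hv2x⟩ := Morley.prod_expand (p : ZMod (p ^ 3)) hP3 (Ioc 0 m)
    (fun k => (((2 * k : ℕ) : ZMod (p ^ 3)))⁻¹)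
  have hv1 : (∏ k ∈ Ioc 0 m, (1 + (p : ZMod (p ^ 3)) * (((2 * k : ℕ) : ZMod (p ^ 3)))⁻¹))
      = 1 + (p : ZMod (p ^ 3)) * (∑ k ∈ Ioc 0 m, (((2 * k : ℕ) : ZMod (p ^ 3)))⁻¹)
        + (p : ZMod (p ^ 3)) ^ 2 * eV := hv1x
  have hv2 : 2 * eV = (∑ k ∈ Ioc 0 m, (((2 * k : ℕ) : ZMod (p ^ 3)))⁻¹) ^ 2
      - ∑ k ∈ Ioc 0 m, ((((2 * k : ℕ) : ZMod (p ^ 3)))⁻¹) ^ 2 := hv2x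
  obtain ⟨t, ht1x, ht2x⟩ := Morley.prod_expand (p : ZMod (p ^ 3)) hP3 (Ioc 0 m)
    (fun k => -(((k : ZMod (p ^ 3)))⁻¹))
  have ht1 : (∏ k ∈ Ioc 0 m, (1 + (p : ZMod (p ^ 3)) * (-(((k : ZMod (p ^ 3)))⁻¹))))
      = 1 + (p : ZMod (p ^ 3)) * (∑ k ∈ Ioc 0 m, -(((k : ZMod (p ^ 3)))⁻¹))
        + (p : ZMod (p ^ 3)) ^ 2 * t := ht1x
  have ht2 : 2 * t = (∑ k ∈ Ioc 0 m, -(((k : ZMod (p ^ 3)))⁻¹)) ^ 2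
      - ∑ k ∈ Ioc 0 m, ((-(((k : ZMod (p ^ 3)))⁻¹))) ^ 2 := ht2x
  have heW0 : (p : ZMod (p ^ 3)) ^ 2 * eW = 0 := by
    have h2 : (2 : ZMod (p ^ 3)) * ((p : ZMod (p ^ 3)) ^ 2 * eW) = 0 := by
      linear_combination (p : ZMod (p ^ 3)) ^ 2 * hw2
        + ((∑ j ∈ Ioc 0 (2 * m), ((j : ZMod (p ^ 3)))⁻¹) * (p : ZMod (p ^ 3))) * hph - hQfull
    exact hu2.mul_left_cancel (by rw [h2, mul_zero])
  -- W in R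
  have hWR : ((∏ j ∈ Ioc 0 (2 * m), (p + j) : ℕ) : ZMod (p ^ 3))
      = ((Nat.factorial (2 * m) : ℕ) : ZMod (p ^ 3)) := by
    rw [Nat.cast_prod]
    have h1 : ∀ j ∈ Ioc 0 (2 * m), ((p + j : ℕ) : ZMod (p ^ 3))
        = (j : ZMod (p ^ 3)) * (1 + (p : ZMod (p ^ 3)) * ((j : ZMod (p ^ 3)))⁻¹) := by
      intro j hj; simp only [mem_Ioc] at hj
      have h2 := hui j hj.1 (by omega)
      rw [Nat.cast_add]
      linear_combination (-(p : ZMod (p ^ 3))) * h2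
    rw [Finset.prod_congr rfl h1, Finset.prod_mul_distrib, hw1, ← Nat.cast_prod,
      Morley.prod_Ioc_id]
    linear_combination ((Nat.factorial (2 * m) : ℕ) : ZMod (p ^ 3)) * hph
      + ((Nat.factorial (2 * m) : ℕ) : ZMod (p ^ 3)) * heW0
  -- V in R
  have hnat2 : (∏ k ∈ Ioc 0 m, (2 * k)) = 2 ^ m * Nat.factorial m := by
    rw [Finset.prod_mul_distrib, Finset.prod_const, Nat.card_Ioc, Morley.prod_Ioc_id,
      Nat.sub_zero]
  have hVR : ((∏ k ∈ Ioc 0 m, (p + 2 * k) : ℕ) : ZMod (p ^ 3))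
      = (2 : ZMod (p ^ 3)) ^ m * ((Nat.factorial m : ℕ) : ZMod (p ^ 3))
        * (1 + (p : ZMod (p ^ 3)) * (∑ k ∈ Ioc 0 m, (((2 * k : ℕ) : ZMod (p ^ 3)))⁻¹)
          + (p : ZMod (p ^ 3)) ^ 2 * eV) := by
    rw [Nat.cast_prod]
    have h1 : ∀ k ∈ Ioc 0 m, ((p + 2 * k : ℕ) : ZMod (p ^ 3))
        = ((2 * k : ℕ) : ZMod (p ^ 3))
          * (1 + (p : ZMod (p ^ 3)) * (((2 * k : ℕ) : ZMod (p ^ 3)))⁻¹) := by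
      intro k hk; simp only [mem_Ioc] at hk
      have h2 := hui (2 * k) (by omega) (by omega)
      rw [Nat.cast_add]
      linear_combination (-(p : ZMod (p ^ 3))) * h2
    rw [Finset.prod_congr rfl h1, Finset.prod_mul_distrib, hv1, ← Nat.cast_prod, hnat2,
      Nat.cast_mul, Nat.cast_pow, Nat.cast_ofNat]
  -- the star identity in ℕ
  have e3 : Nat.factorial m * ∏ j ∈ Ioc m (2 * m), j = Nat.factorial (2 * m) := by
    rw [← Morley.prod_Ioc_id m, ← Morley.prod_Ioc_id (2 * m),
      Finset.prod_Ioc_consecutive _ (Nat.zero_le m) (by omega)]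
  have hstar : (∏ j ∈ Ioc 0 (2 * m), (p + j)) * Nat.factorial m
      = 2 ^ m * Nat.factorial (2 * m) * ∏ k ∈ Ioc 0 m, (p + 2 * k) := by
    rw [Morley.prod_split p m]
    have e1 : (∏ k ∈ Ioc 0 m, (p + (2 * k - 1))) = ∏ k ∈ Ioc 0 m, (2 * (m + k)) := by
      refine Finset.prod_congr rfl ?_
      intro k hk; simp only [mem_Ioc] at hk; omega
    have e2 : (∏ k ∈ Ioc 0 m, (m + k)) = ∏ j ∈ Ioc m (2 * m), j := by
      refine Finset.prod_nbij' (fun k => m + k) (fun j => j - m) ?_ ?_ ?_ ?_ ?_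
      · intro k hk; simp only [mem_Ioc] at hk ⊢; omega
      · intro j hj; simp only [mem_Ioc] at hj ⊢; omega
      · intro k hk; simp only [mem_Ioc] at hk; show m + k - m = k; omega
      · intro j hj; simp only [mem_Ioc] at hj; show m + (j - m) = j; omega
      · intro k hk; rfl
    have e4 : (∏ k ∈ Ioc 0 m, (2 * (m + k))) = 2 ^ m * ∏ j ∈ Ioc m (2 * m), j := by
      rw [Finset.prod_mul_distrib, Finset.prod_const, Nat.card_Ioc, Nat.sub_zero, e2]
    rw [e1, e4, ← e3]
    ring
  -- the 4^m identity
  have h4pow : (4 : ZMod (p ^ 3)) ^ m = 2 ^ m * 2 ^ m := by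
    rw [← mul_pow]; norm_num
  have hZ : (4 : ZMod (p ^ 3)) ^ m
      * (1 + (p : ZMod (p ^ 3)) * (∑ k ∈ Ioc 0 m, (((2 * k : ℕ) : ZMod (p ^ 3)))⁻¹)
        + (p : ZMod (p ^ 3)) ^ 2 * eV) = 1 := by
    have hcast := congrArg (fun n : ℕ => (n : ZMod (p ^ 3))) hstar
    simp only [Nat.cast_mul, Nat.cast_pow, Nat.cast_ofNat] at hcast
    rw [hWR, hVR] at hcast
    apply (hufact2m.mul hufactm).mul_left_cancel
    rw [mul_one]
    linear_combination (-1 : ZMod (p ^ 3)) * hcast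
      + (((Nat.factorial (2 * m) : ℕ) : ZMod (p ^ 3)) * ((Nat.factorial m : ℕ) : ZMod (p ^ 3))
        * (1 + (p : ZMod (p ^ 3)) * (∑ k ∈ Ioc 0 m, (((2 * k : ℕ) : ZMod (p ^ 3)))⁻¹)
          + (p : ZMod (p ^ 3)) ^ 2 * eV)) * h4pow
  -- the choose expansion
  have hnat1 : (∏ k ∈ Ioc 0 m, (p - k)) = (2 * m).choose m * Nat.factorial m := by
    have e1 : (∏ k ∈ Ioc 0 m, (p - k)) = ∏ j ∈ Ioc m (2 * m), j := by
      refine Finset.prod_nbij' (fun k => p - k) (fun j => p - j) ?_ ?_ ?_ ?_ ?_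
      · intro k hk; simp only [mem_Ioc] at hk ⊢; omega
      · intro j hj; simp only [mem_Ioc] at hj ⊢; omega
      · intro k hk; simp only [mem_Ioc] at hk; show p - (p - k) = k; omega
      · intro j hj; simp only [mem_Ioc] at hj; show p - (p - j) = j; omega
      · intro k hk; rfl
    have e4 := Nat.choose_mul_factorial_mul_factorial (show m ≤ 2 * m from by omega)
    rw [show 2 * m - m = m from by omega] at e4
    have e6 : (∏ k ∈ Ioc 0 m, (p - k)) * Nat.factorial m
        = (2 * m).choose m * Nat.factorial m * Nat.factorial m := by
      rw [e1, mul_comm, e3]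
      exact e4.symm
    exact Nat.eq_of_mul_eq_mul_right (Nat.factorial_pos m) e6
  have hC : (((2 * m).choose m : ℕ) : ZMod (p ^ 3))
      = (-1) ^ m * (1 + (p : ZMod (p ^ 3)) * (∑ k ∈ Ioc 0 m, -(((k : ZMod (p ^ 3)))⁻¹))
          + (p : ZMod (p ^ 3)) ^ 2 * t) := by
    have hcast := congrArg (fun n : ℕ => (n : ZMod (p ^ 3))) hnat1
    simp only [Nat.cast_mul, Nat.cast_prod] at hcast
    have h1 : ∀ k ∈ Ioc 0 m, ((p - k : ℕ) : ZMod (p ^ 3))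
        = (-(k : ZMod (p ^ 3))) * (1 + (p : ZMod (p ^ 3)) * (-(((k : ZMod (p ^ 3)))⁻¹))) := by
      intro k hk; simp only [mem_Ioc] at hk
      have h2 := hui k hk.1 (by omega)
      rw [Nat.cast_sub (by omega : k ≤ p)]
      linear_combination (-(p : ZMod (p ^ 3))) * h2
    rw [Finset.prod_congr rfl h1, Finset.prod_mul_distrib, ht1] at hcast
    have h3 : (∏ k ∈ Ioc 0 m, (-(k : ZMod (p ^ 3))))
        = (-1) ^ m * ((Nat.factorial m : ℕ) : ZMod (p ^ 3)) := by
      have h4 : ∀ k ∈ Ioc 0 m, (-(k : ZMod (p ^ 3))) = (-1) * (k : ZMod (p ^ 3)) := by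
        intros; ring
      rw [Finset.prod_congr rfl h4, Finset.prod_mul_distrib, Finset.prod_const, Nat.card_Ioc,
        Nat.sub_zero, ← Nat.cast_prod, Morley.prod_Ioc_id]
    rw [h3] at hcast
    apply hufactm.mul_left_cancel
    linear_combination (-1 : ZMod (p ^ 3)) * hcast
  -- relation s = 2 E
  have hsE : (∑ k ∈ Ioc 0 m, ((k : ZMod (p ^ 3)))⁻¹)
      = 2 * (∑ k ∈ Ioc 0 m, (((2 * k : ℕ) : ZMod (p ^ 3)))⁻¹) := by
    rw [Finset.mul_sum]
    refine Finset.sum_congr rfl ?_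
    intro k hk; simp only [mem_Ioc] at hk
    have h1 := hui k hk.1 (by omega)
    have h2 := hui (2 * k) (by omega) (by omega)
    have h3 : ((2 * k : ℕ) : ZMod (p ^ 3)) = 2 * (k : ZMod (p ^ 3)) := by push_cast; ring
    linear_combination (2 * (((2 * k : ℕ) : ZMod (p ^ 3)))⁻¹) * h1
      - (((k : ZMod (p ^ 3)))⁻¹) * h2
      + (((k : ZMod (p ^ 3)))⁻¹ * (((2 * k : ℕ) : ZMod (p ^ 3)))⁻¹) * h3
  -- massage ht2
  have e1s : (∑ k ∈ Ioc 0 m, -(((k : ZMod (p ^ 3)))⁻¹))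
      = -(∑ k ∈ Ioc 0 m, ((k : ZMod (p ^ 3)))⁻¹) := Finset.sum_neg_distrib _
  have ht2' : 2 * t = (∑ k ∈ Ioc 0 m, ((k : ZMod (p ^ 3)))⁻¹) ^ 2
      - ∑ k ∈ Ioc 0 m, (((k : ZMod (p ^ 3)))⁻¹) ^ 2 := by
    have e2s : (∑ k ∈ Ioc 0 m, ((-(((k : ZMod (p ^ 3)))⁻¹))) ^ 2)
        = ∑ k ∈ Ioc 0 m, (((k : ZMod (p ^ 3)))⁻¹) ^ 2 :=
      Finset.sum_congr rfl (fun k _ => neg_sq _)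
    rw [ht2, e1s, e2s, neg_sq]
  -- key0
  have key0 : (p : ZMod (p ^ 3)) ^ 2
      * (t + 2 * eV - 3 * (∑ k ∈ Ioc 0 m, (((2 * k : ℕ) : ZMod (p ^ 3)))⁻¹) ^ 2) = 0 := by
    have k1 : (2 : ZMod (p ^ 3)) * ((p : ZMod (p ^ 3)) ^ 2
        * (t + 2 * eV - 3 * (∑ k ∈ Ioc 0 m, (((2 * k : ℕ) : ZMod (p ^ 3)))⁻¹) ^ 2)) = 0 := by
      linear_combination (p : ZMod (p ^ 3)) ^ 2 * ht2' + 2 * (p : ZMod (p ^ 3)) ^ 2 * hv2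
        - hQ - 2 * hE2
        + ((p : ZMod (p ^ 3)) ^ 2 * ((∑ k ∈ Ioc 0 m, ((k : ZMod (p ^ 3)))⁻¹)
          + 2 * (∑ k ∈ Ioc 0 m, (((2 * k : ℕ) : ZMod (p ^ 3)))⁻¹))) * hsE
    exact hu2.mul_left_cancel (by rw [k1, mul_zero])
  -- final computation
  have hfin : (1 - (p : ZMod (p ^ 3)) * (∑ k ∈ Ioc 0 m, ((k : ZMod (p ^ 3)))⁻¹)
        + (p : ZMod (p ^ 3)) ^ 2 * t) = ((4 : ZMod (p ^ 3)) ^ m) ^ 2 :=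
    Morley.final_alg _ _ _ _ _ _ hP3 hsE key0 hZ
  rw [hC, e1s, show 2 * m = m * 2 from mul_comm 2 m, pow_mul]
  rw [← mul_assoc, ← mul_pow]
  norm_num
  linear_combination hfin
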